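/- Let H ∈ (1/2, 1), set α = H − 1/2, and let c_H = sqrt( H(2H−1) / B(2−2H, H−1/2) ), where B denotes the Beta function. Define, for 0 < u < t, the kernel K_H(t,u) = c_H u^{−α} ∫_u^t (r−u)^{α−1} r^α dr. Then for all 0 < s ≤ t, ∫_0^s K_H(t,u) K_H(s,u) du = (1/2) ( t^{2H} + s^{2H} − (t−s)^{2H} ), i.e. the kernel K_H reproduces the fractional Brownian motion covariance R_H(t,s). -/

import Mathlib

open MeasureTheory intervalIntegral

/-- The (real) Beta function `B(a,b) = ∫_0^1 y^(a-1) (1-y)^(b-1) dy`. -/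
noncomputable def betaFun (a b : ℝ) : ℝ :=
  ∫ y in (0:ℝ)..1, y ^ (a - 1) * (1 - y) ^ (b - 1)

/-- The square-integrable kernel of fractional Brownian motion for `H > 1/2`:
`K_H(t,u) = c_H u^{-α} ∫_u^t (r-u)^{α-1} r^α dr` with `α = H - 1/2`. -/
noncomputable def fbmKernel (H t u : ℝ) : ℝ :=
  Real.sqrt (H * (2 * H - 1) / betaFun (2 - 2 * H) (H - 1 / 2)) *
    u ^ (-(H - 1 / 2)) * ∫ r in u..t, (r - u) ^ ((H - 1 / 2) - 1) * r ^ (H - 1 / 2)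

namespace FbmAux
open Set

lemma ii_rpow_sub {c : ℝ} (d : ℝ) {p : ℝ} (hp : -1 < p) :
    IntervalIntegrable (fun u => (u - c) ^ p) volume c d := by
  have h := (intervalIntegrable_rpow' (a := 0) (b := d - c) hp).comp_sub_right c
  simpa using h

lemma ii_rpow_sub' {d : ℝ} (c : ℝ) {p : ℝ} (hp : -1 < p) :
    IntervalIntegrable (fun u => (d - u) ^ p) volume c d := by
  have h := (intervalIntegrable_rpow' (a := 0) (b := d - c) hp).comp_sub_left d
  simpa using h.symm

lemma integral_rpow_sub {c d : ℝ} (h : c ≤ d) {p : ℝ} (hp : -1 < p) :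
    ∫ u in c..d, (u - c) ^ p = (d - c) ^ (p + 1) / (p + 1) := by
  rw [intervalIntegral.integral_comp_sub_right (fun x => x ^ p) c]
  rw [integral_rpow (Or.inl hp)]
  simp [Real.zero_rpow (by linarith : p + 1 ≠ 0)]

lemma integral_rpow_sub' {c d : ℝ} (h : c ≤ d) {p : ℝ} (hp : -1 < p) :
    ∫ u in c..d, (d - u) ^ p = (d - c) ^ (p + 1) / (p + 1) := by
  rw [intervalIntegral.integral_comp_sub_left (fun x => x ^ p) d]
  rw [integral_rpow (Or.inl hp)]
  simp [Real.zero_rpow (by linarith : p + 1 ≠ 0)]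



lemma contOn_rpow_sub' {d : ℝ} (q : ℝ) {s : Set ℝ} (hs : ∀ x ∈ s, x < d) :
    ContinuousOn (fun u : ℝ => (d - u) ^ q) s := by
  apply ContinuousOn.rpow_const (by fun_prop)
  intro x hx; exact Or.inl (sub_ne_zero.mpr (hs x hx).ne')

lemma contOn_rpow_sub {c : ℝ} (p : ℝ) {s : Set ℝ} (hs : ∀ x ∈ s, c < x) :
    ContinuousOn (fun u : ℝ => (u - c) ^ p) s := by
  apply ContinuousOn.rpow_const (by fun_prop)
  intro x hx; exact Or.inl (sub_ne_zero.mpr (hs x hx).ne')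

lemma ii_rpow_mul {c d p q : ℝ} (h : c < d) (hp : -1 < p) (hq : -1 < q) :
    IntervalIntegrable (fun u => (u - c) ^ p * (d - u) ^ q) volume c d := by
  have hm1 : c ≤ (c + d) / 2 := by linarith
  have hm2 : (c + d) / 2 ≤ d := by linarith
  apply IntervalIntegrable.trans (b := (c + d) / 2)
  · apply (ii_rpow_sub _ hp).mul_continuousOn
    apply contOn_rpow_sub' q
    intro x hx
    rw [uIcc_of_le hm1] at hx
    have := hx.2; linarith
  · apply (ii_rpow_sub' _ hq).continuousOn_mul
    apply contOn_rpow_sub p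
    intro x hx
    rw [uIcc_of_le hm2] at hx
    have := hx.1; linarith



/-- The Möbius substitution lemma: for `0 < v < t` and `0 < a < 1/2`,
`∫_0^v u^{-2a} (v-u)^{a-1} (t-u)^{a-1} du = B · (vt)^{-a} (t-v)^{2a-1}`. -/
lemma key_beta {a : ℝ} (ha : 0 < a) {v t : ℝ} (hv : 0 < v) (hvt : v < t) :
    ∫ u in Ioo 0 v, u ^ (-(2*a)) * ((v - u) ^ (a-1) * (t - u) ^ (a-1))
      = (∫ z in Ioo (0:ℝ) 1, z ^ (-(2*a)) * (1 - z) ^ (a-1))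
          * ((v*t) ^ (-a) * (t-v) ^ (2*a-1)) := by
  have ht : 0 < t := hv.trans hvt
  have htv : 0 < t - v := by linarith
  set φ : ℝ → ℝ := fun z => z*v*t/(t - v + v*z) with hφ
  have hD : ∀ z ∈ Ioo (0:ℝ) 1, 0 < t - v + v*z := by
    intro z hz; nlinarith [hz.1]
  have hderiv : ∀ z ∈ Ioo (0:ℝ) 1,
      HasDerivWithinAt φ (v*t*(t-v)/(t - v + v*z)^2) (Ioo 0 1) z := by
    intro z hz
    have hDz := hD z hz
    have h1 : HasDerivAt (fun z : ℝ => z*v*t) (v*t) z := by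
      simpa [mul_assoc] using (hasDerivAt_id z).mul_const (v*t)
    have h2 : HasDerivAt (fun z : ℝ => t - v + v*z) v z := by
      simpa using ((hasDerivAt_id z).const_mul v).const_add (t - v)
    have := h1.div h2 hDz.ne'
    convert this.hasDerivWithinAt using 1
    · rfl
    · rfl
    · rfl
    ring
  have himg : φ '' Ioo 0 1 = Ioo 0 v := by
    ext u
    constructor
    · rintro ⟨z, hz, rfl⟩
      have hDz := hD z hz
      have hz0 := hz.1
      have h1z : 0 < 1 - z := by have := hz.2; linarith
      constructor
      · have h3 : 0 < z*v*t := by positivity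
        positivity
      · rw [div_lt_iff₀ hDz]
        nlinarith [mul_pos (mul_pos hv htv) h1z]
    · intro hu
      obtain ⟨hu1, hu2⟩ := hu
      have htu : 0 < t - u := by linarith
      refine ⟨u*(t-v)/(v*(t-u)), ⟨by positivity, ?_⟩, ?_⟩
      · rw [div_lt_one (by positivity)]
        nlinarith [mul_pos (show (0:ℝ) < v - u by linarith) ht]
      · show _ / _ = u
        rw [div_eq_iff]
        · field_simp
          ring
        · have h1 : 0 < v*(t-u) := by positivity
          have : t - v + v * (u * (t - v) / (v * (t - u))) = (t-v)*t/(t-u) := by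
            field_simp
            ring
          rw [this]
          positivity
  have hinj : InjOn φ (Ioo 0 1) := by
    intro z1 hz1 z2 hz2 h
    have hD1 := hD z1 hz1
    have hD2 := hD z2 hz2
    simp only [hφ] at h
    rw [div_eq_div_iff hD1.ne' hD2.ne'] at h
    have h2 : (z1 - z2) * (v*t*(t-v)) = 0 := by linear_combination h
    have hpos : (0:ℝ) < v*t*(t-v) := by positivity
    have := (mul_eq_zero.mp h2).resolve_right hpos.ne'
    linarith
  calc ∫ u in Ioo 0 v, u ^ (-(2*a)) * ((v - u) ^ (a-1) * (t - u) ^ (a-1))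
      = ∫ z in Ioo (0:ℝ) 1, |v*t*(t-v)/(t - v + v*z)^2|
          • ((φ z) ^ (-(2*a)) * ((v - φ z) ^ (a-1) * (t - φ z) ^ (a-1))) := by
        rw [← himg]
        exact integral_image_eq_integral_abs_deriv_smul measurableSet_Ioo hderiv hinj _
    _ = ∫ z in Ioo (0:ℝ) 1, (z ^ (-(2*a)) * (1 - z) ^ (a-1))
          * ((v*t) ^ (-a) * (t-v) ^ (2*a-1)) := by
        apply setIntegral_congr_fun measurableSet_Ioo
        intro z hz
        simp only [smul_eq_mul]
        have hz0 := hz.1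
        have hz1 : 0 < 1 - z := by have := hz.2; linarith
        have hDz := hD z hz
        have e1 : v - φ z = v*(t-v)*(1-z)/(t - v + v*z) := by
          simp only [hφ]; field_simp; ring
        have e2 : t - φ z = t*(t-v)/(t - v + v*z) := by
          simp only [hφ]; field_simp; ring
        have e0 : φ z = z*v*t/(t - v + v*z) := rfl
        rw [e0, e1, e2, abs_of_pos (by positivity)]
        rw [Real.rpow_def_of_pos (by positivity), Real.rpow_def_of_pos (by positivity),
          Real.rpow_def_of_pos (by positivity), Real.rpow_def_of_pos hz0,
          Real.rpow_def_of_pos hz1, Real.rpow_def_of_pos (by positivity),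
          Real.rpow_def_of_pos htv]
        rw [show v*t*(t-v)/(t - v + v*z)^2
            = Real.exp (Real.log v + Real.log t + Real.log (t-v) - 2*Real.log (t - v + v*z)) by
          rw [Real.exp_sub, Real.exp_add, Real.exp_add, Real.exp_log hv, Real.exp_log ht,
            Real.exp_log htv]
          rw [show (2:ℝ)*Real.log (t - v + v*z) = Real.log ((t - v + v*z)^2) by
            rw [Real.log_pow]; push_cast; ring]
          rw [Real.exp_log (by positivity)]]
        rw [Real.log_div (by positivity) hDz.ne', Real.log_mul (by positivity) ht.ne',
          Real.log_mul hz0.ne' hv.ne',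
          Real.log_div (by positivity) hDz.ne', Real.log_mul (by positivity) hz1.ne',
          Real.log_mul hv.ne' htv.ne',
          Real.log_div (by positivity) hDz.ne', Real.log_mul ht.ne' htv.ne',
          Real.log_mul hv.ne' ht.ne']
        rw [← Real.exp_add, ← Real.exp_add, ← Real.exp_add, ← Real.exp_add, ← Real.exp_add,
          ← Real.exp_add]
        rw [Real.exp_eq_exp]
        ring
    _ = (∫ z in Ioo (0:ℝ) 1, z ^ (-(2*a)) * (1 - z) ^ (a-1))
          * ((v*t) ^ (-a) * (t-v) ^ (2*a-1)) := by
        rw [MeasureTheory.integral_mul_const]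



lemma meas_S : MeasurableSet {p : ℝ × ℝ | p.1 < p.2} :=
  (isOpen_lt continuous_fst continuous_snd).measurableSet

lemma indicator_slice_right (G : ℝ × ℝ → ℝ) (u : ℝ) :
    (fun r => ({p : ℝ × ℝ | p.1 < p.2}.indicator G) (u, r))
      = (Ioi u).indicator (fun r => G (u, r)) := by
  funext r
  by_cases h : u < r <;> simp [Set.indicator_apply, h]

lemma indicator_slice_left (G : ℝ × ℝ → ℝ) (r : ℝ) :
    (fun u => ({p : ℝ × ℝ | p.1 < p.2}.indicator G) (u, r))
      = (Iio r).indicator (fun u => G (u, r)) := by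
  funext u
  by_cases h : u < r <;> simp [Set.indicator_apply, h]

lemma Ioi_inter_Ioo {u c d : ℝ} (hu : c ≤ u) : Ioi u ∩ Ioo c d = Ioo u d := by
  ext x
  simp only [mem_inter_iff, mem_Ioi, mem_Ioo]
  constructor
  · rintro ⟨h1, _, h3⟩; exact ⟨h1, h3⟩
  · rintro ⟨h1, h2⟩; exact ⟨h1, lt_of_le_of_lt hu h1, h2⟩

lemma Iio_inter_Ioo {r c d : ℝ} (hr : c < r) : Iio r ∩ Ioo c d = Ioo c (min r d) := by
  ext x
  simp only [mem_inter_iff, mem_Iio, mem_Ioo, lt_min_iff]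
  tauto

lemma integral_restrict_indicator_right {u t : ℝ} (hu : 0 ≤ u) (g : ℝ → ℝ) :
    ∫ r in Ioo 0 t, (Ioi u).indicator g r = ∫ r in Ioo u t, g r := by
  rw [MeasureTheory.integral_indicator measurableSet_Ioi,
    Measure.restrict_restrict measurableSet_Ioi, Ioi_inter_Ioo hu]

lemma integral_restrict_indicator_left {r v : ℝ} (hr : 0 < r) (g : ℝ → ℝ) :
    ∫ u in Ioo 0 v, (Iio r).indicator g u = ∫ u in Ioo 0 (min r v), g u := by
  rw [MeasureTheory.integral_indicator measurableSet_Iio,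
    Measure.restrict_restrict measurableSet_Iio, Iio_inter_Ioo hr]



lemma setIntegral_rpow_sub {c d : ℝ} (h : c ≤ d) {p : ℝ} (hp : -1 < p) :
    ∫ u in Ioo c d, (u - c) ^ p = (d - c) ^ (p+1) / (p+1) := by
  rw [← integral_Ioc_eq_integral_Ioo, ← intervalIntegral.integral_of_le h,
    integral_rpow_sub h hp]

lemma setIntegral_rpow_sub' {c d : ℝ} (h : c ≤ d) {p : ℝ} (hp : -1 < p) :
    ∫ u in Ioo c d, (d - u) ^ p = (d - c) ^ (p+1) / (p+1) := by
  rw [← integral_Ioc_eq_integral_Ioo, ← intervalIntegral.integral_of_le h,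
    integral_rpow_sub' h hp]

lemma integrableOn_Ioo_rpow_sub {c d : ℝ} (h : c ≤ d) {p : ℝ} (hp : -1 < p) :
    IntegrableOn (fun u => (u - c) ^ p) (Ioo c d) := by
  exact (intervalIntegrable_iff_integrableOn_Ioo_of_le h).mp (ii_rpow_sub d hp)

lemma slice_int {a u t : ℝ} (ha : 0 < a) (hu : 0 ≤ u) (h : u ≤ t) :
    IntegrableOn (fun r => (r - u) ^ (a-1) * r ^ a) (Ioo u t) := by
  apply (intervalIntegrable_iff_integrableOn_Ioo_of_le h).mp
  apply (ii_rpow_sub t (by linarith)).mul_continuousOn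
  apply ContinuousOn.rpow_const (by fun_prop)
  exact fun x _ => Or.inr ha.le

lemma slice_bound {a u t : ℝ} (ha : 0 < a) (hu : 0 ≤ u) (h : u ≤ t) :
    ∫ r in Ioo u t, (r - u) ^ (a-1) * r ^ a ≤ t ^ a * (t ^ a / a) := by
  have ht : 0 ≤ t := le_trans hu h
  calc ∫ r in Ioo u t, (r - u) ^ (a-1) * r ^ a
      ≤ ∫ r in Ioo u t, (r - u) ^ (a-1) * t ^ a := by
        apply setIntegral_mono_on (slice_int ha hu h)
          ((integrableOn_Ioo_rpow_sub h (by linarith)).mul_const _) measurableSet_Ioo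
        intro r hr
        apply mul_le_mul_of_nonneg_left _ (Real.rpow_nonneg (by linarith [hr.1]) _)
        exact Real.rpow_le_rpow (le_of_lt (lt_of_le_of_lt hu hr.1)) hr.2.le ha.le
    _ = (t - u) ^ a / a * t ^ a := by
        rw [MeasureTheory.integral_mul_const, setIntegral_rpow_sub h (by linarith)]
        rw [show a - 1 + 1 = a by ring]
    _ ≤ t ^ a / a * t ^ a := by
        apply mul_le_mul_of_nonneg_right _ (Real.rpow_nonneg ht _)
        gcongr
        all_goals linarith
    _ = t ^ a * (t ^ a / a) := by ring



lemma integrableOn_Ioo_rpow_mul {d p q : ℝ} (hd : 0 < d) (hp : -1 < p) (hq : -1 < q) :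
    IntegrableOn (fun u => u ^ p * (d - u) ^ q) (Ioo 0 d) := by
  have := (intervalIntegrable_iff_integrableOn_Ioo_of_le hd.le).mp
    (ii_rpow_mul hd hp hq)
  simpa using this

lemma fub2 {a v t : ℝ} (ha : 0 < a) (ha2 : a < 1/2) (hv : 0 < v) (hvt : v ≤ t) :
    ∫ u in Ioo 0 v, u ^ (-(2*a)) * (v - u) ^ (a-1) * ∫ r in Ioo u t, (r - u) ^ (a-1) * r ^ a
      = ∫ r in Ioo 0 t, r ^ a *
          ∫ u in Ioo 0 (min r v), u ^ (-(2*a)) * ((v - u) ^ (a-1) * (r - u) ^ (a-1)) := by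
  have ht : 0 < t := lt_of_lt_of_le hv hvt
  set G : ℝ × ℝ → ℝ := fun p =>
    p.1 ^ (-(2*a)) * (v - p.1) ^ (a-1) * ((p.2 - p.1) ^ (a-1) * p.2 ^ a) with hG
  set F : ℝ × ℝ → ℝ := {p : ℝ × ℝ | p.1 < p.2}.indicator G with hF
  set μ := volume.restrict (Ioo (0:ℝ) v)
  set ν := volume.restrict (Ioo (0:ℝ) t)
  have hGm : Measurable G := by
    simp only [hG]; fun_prop
  have hFm : Measurable F := hGm.indicator meas_S
  have hFae : AEStronglyMeasurable F (μ.prod ν) := hFm.aestronglyMeasurable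
  -- slices in r
  have hslice : ∀ u ∈ Ioo (0:ℝ) v, Integrable (fun r => F (u, r)) ν := by
    intro u hu
    have : (fun r => F (u, r)) = (Ioi u).indicator (fun r => G (u, r)) :=
      indicator_slice_right G u
    rw [this, integrable_indicator_iff measurableSet_Ioi]
    rw [IntegrableOn, Measure.restrict_restrict measurableSet_Ioi, Ioi_inter_Ioo hu.1.le]
    have : (fun r => G (u, r))
        = fun r => (u ^ (-(2*a)) * (v - u) ^ (a-1)) * ((r - u) ^ (a-1) * r ^ a) := by
      funext r; simp only [hG]
    rw [this]
    exact (slice_int ha hu.1.le (le_trans hu.2.le hvt)).const_mul _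
  -- value of the inner integral over r
  have inner_eq : ∀ u ∈ Ioo (0:ℝ) v, ∫ r, F (u, r) ∂ν
      = (u ^ (-(2*a)) * (v - u) ^ (a-1)) * ∫ r in Ioo u t, (r - u) ^ (a-1) * r ^ a := by
    intro u hu
    rw [show (fun r => F (u, r)) = (Ioi u).indicator (fun r => G (u, r)) from
      indicator_slice_right G u]
    rw [show (∫ r, (Ioi u).indicator (fun r => G (u, r)) r ∂ν)
        = ∫ r in Ioo u t, G (u, r) from integral_restrict_indicator_right hu.1.le _]
    rw [show (fun r => G (u, r))
        = fun r => (u ^ (-(2*a)) * (v - u) ^ (a-1)) * ((r - u) ^ (a-1) * r ^ a) by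
      funext r; simp only [hG]]
    exact MeasureTheory.integral_const_mul _ _
  -- nonnegativity of F on relevant region
  have hFnn : ∀ u ∈ Ioo (0:ℝ) v, ∀ r ∈ Ioo (0:ℝ) t, 0 ≤ F (u, r) := by
    intro u hu r hr
    by_cases h : u < r
    · have : F (u, r) = G (u, r) := by
        simp [hF, Set.indicator_apply, h]
      rw [this]
      simp only [hG]
      have h1 : (0:ℝ) ≤ u := hu.1.le
      have h2 : (0:ℝ) ≤ v - u := by linarith [hu.2]
      have h3 : (0:ℝ) ≤ r - u := by linarith
      have h4 : (0:ℝ) ≤ r := hr.1.le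
      positivity
    · have : F (u, r) = 0 := by
        simp [hF, Set.indicator_apply, h]
      rw [this]
  -- integrability of F on the product
  have hFint : Integrable F (μ.prod ν) := by
    rw [show F = Function.uncurry (fun u r => F (u, r)) from rfl]
    apply (integrable_prod_iff hFae).mpr
    constructor
    · filter_upwards [ae_restrict_mem measurableSet_Ioo] with u hu
      exact hslice u hu
    · apply Integrable.mono'
        (g := fun u => (t ^ a * (t ^ a / a)) * (u ^ (-(2*a)) * (v - u) ^ (a-1)))
      · apply Integrable.const_mul
        have := integrableOn_Ioo_rpow_mul hv (show (-1:ℝ) < -(2*a) by linarith)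
          (show (-1:ℝ) < a - 1 by linarith)
        exact this
      · exact hFae.norm.integral_prod_right'
      · filter_upwards [ae_restrict_mem measurableSet_Ioo] with u hu
        have h1 : (0:ℝ) ≤ u := hu.1.le
        have h2 : (0:ℝ) ≤ v - u := by linarith [hu.2]
        have hnrm : ∫ r, ‖F (u, r)‖ ∂ν = ∫ r, F (u, r) ∂ν := by
          apply MeasureTheory.integral_congr_ae
          filter_upwards [ae_restrict_mem measurableSet_Ioo] with r hr
          exact Real.norm_of_nonneg (hFnn u hu r hr)
        have hIpos : 0 ≤ ∫ r in Ioo u t, (r - u) ^ (a-1) * r ^ a := by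
          apply setIntegral_nonneg measurableSet_Ioo
          intro r hr
          have h3 : (0:ℝ) ≤ r - u := by linarith [hr.1]
          have h4 : (0:ℝ) ≤ r := le_trans h1 hr.1.le
          positivity
        have hAB : 0 ≤ u ^ (-(2*a)) * (v - u) ^ (a-1) :=
          mul_nonneg (Real.rpow_nonneg h1 _) (Real.rpow_nonneg h2 _)
        rw [Real.norm_of_nonneg (by rw [hnrm, inner_eq u hu]; exact mul_nonneg hAB hIpos)]
        rw [hnrm, inner_eq u hu, mul_comm]
        exact mul_le_mul_of_nonneg_right (slice_bound ha h1 (le_trans hu.2.le hvt)) hAB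
  -- Fubini
  have swap := MeasureTheory.integral_integral_swap (f := fun u r => F (u, r))
    (μ := μ) (ν := ν) hFint
  calc ∫ u in Ioo 0 v, u ^ (-(2*a)) * (v - u) ^ (a-1) * ∫ r in Ioo u t, (r - u) ^ (a-1) * r ^ a
      = ∫ u, (∫ r, F (u, r) ∂ν) ∂μ := by
        apply (setIntegral_congr_fun measurableSet_Ioo ?_).symm
        intro u hu
        exact inner_eq u hu
    _ = ∫ r, (∫ u, F (u, r) ∂μ) ∂ν := swap
    _ = ∫ r in Ioo 0 t, r ^ a *
          ∫ u in Ioo 0 (min r v), u ^ (-(2*a)) * ((v - u) ^ (a-1) * (r - u) ^ (a-1)) := by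
        apply setIntegral_congr_fun measurableSet_Ioo
        intro r hr
        beta_reduce
        rw [show (fun u => F (u, r)) = (Iio r).indicator (fun u => G (u, r)) from
          indicator_slice_left G r]
        rw [show (∫ u, (Iio r).indicator (fun u => G (u, r)) u ∂μ)
            = ∫ u in Ioo 0 (min r v), G (u, r) from integral_restrict_indicator_left hr.1 _]
        rw [show (fun u => G (u, r))
            = fun u => r ^ a * (u ^ (-(2*a)) * ((v - u) ^ (a-1) * (r - u) ^ (a-1))) by
          funext u; simp only [hG]; ring]
        exact MeasureTheory.integral_const_mul _ _



/-- The inner kernel integral, as a measurable function of `u`. -/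
noncomputable def Af (a t : ℝ) : ℝ → ℝ := fun u =>
  ∫ r, ({p : ℝ × ℝ | p.1 < p.2}.indicator
    (fun p => (p.2 - p.1) ^ (a-1) * p.2 ^ a)) (u, r) ∂(volume.restrict (Ioo 0 t))

lemma Af_measurable (a t : ℝ) : StronglyMeasurable (Af a t) := by
  apply StronglyMeasurable.integral_prod_right'
    (f := ({p : ℝ × ℝ | p.1 < p.2}.indicator (fun p => (p.2 - p.1) ^ (a-1) * p.2 ^ a)))
  apply Measurable.stronglyMeasurable
  apply Measurable.indicator _ meas_S
  fun_prop

lemma Af_eq {a t : ℝ} (u : ℝ) (hu : 0 ≤ u) :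
    Af a t u = ∫ r in Ioo u t, (r - u) ^ (a-1) * r ^ a := by
  unfold Af
  rw [show (fun r => ({p : ℝ × ℝ | p.1 < p.2}.indicator
      (fun p => (p.2 - p.1) ^ (a-1) * p.2 ^ a)) (u, r))
    = (Ioi u).indicator (fun r => (r - u) ^ (a-1) * r ^ a) from indicator_slice_right _ u]
  exact integral_restrict_indicator_right hu _

lemma Af_nonneg {a t : ℝ} (u : ℝ) (hu : 0 ≤ u) : 0 ≤ Af a t u := by
  rw [Af_eq u hu]
  apply setIntegral_nonneg measurableSet_Ioo
  intro r hr
  have h3 : (0:ℝ) ≤ r - u := by linarith [hr.1]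
  have h4 : (0:ℝ) ≤ r := le_trans hu hr.1.le
  positivity

lemma Af_bound {a u t : ℝ} (ha : 0 < a) (hu : 0 ≤ u) (h : u ≤ t) :
    Af a t u ≤ t ^ a * (t ^ a / a) := by
  rw [Af_eq u hu]
  exact slice_bound ha hu h

lemma fub1 {a s t : ℝ} (ha : 0 < a) (ha2 : a < 1/2) (hs : 0 < s) (hst : s ≤ t) :
    ∫ u in Ioo 0 s, u ^ (-(2*a)) * Af a t u * ∫ v in Ioo u s, (v - u) ^ (a-1) * v ^ a
      = ∫ v in Ioo 0 s, v ^ a *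
          ∫ u in Ioo 0 v, u ^ (-(2*a)) * Af a t u * (v - u) ^ (a-1) := by
  have ht : 0 < t := lt_of_lt_of_le hs hst
  have hAm : Measurable (Af a t) := (Af_measurable a t).measurable
  set G : ℝ × ℝ → ℝ := fun p =>
    p.1 ^ (-(2*a)) * Af a t p.1 * ((p.2 - p.1) ^ (a-1) * p.2 ^ a) with hG
  set F : ℝ × ℝ → ℝ := {p : ℝ × ℝ | p.1 < p.2}.indicator G with hF
  set μ := volume.restrict (Ioo (0:ℝ) s)
  have hGm : Measurable G := by
    simp only [hG]; fun_prop
  have hFm : Measurable F := hGm.indicator meas_S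
  have hFae : AEStronglyMeasurable F (μ.prod μ) := hFm.aestronglyMeasurable
  have hslice : ∀ u ∈ Ioo (0:ℝ) s, Integrable (fun v => F (u, v)) μ := by
    intro u hu
    rw [indicator_slice_right G u, integrable_indicator_iff measurableSet_Ioi]
    rw [IntegrableOn, Measure.restrict_restrict measurableSet_Ioi, Ioi_inter_Ioo hu.1.le]
    rw [show (fun v => G (u, v))
        = fun v => (u ^ (-(2*a)) * Af a t u) * ((v - u) ^ (a-1) * v ^ a) by
      funext v; simp only [hG]]
    exact (slice_int ha hu.1.le hu.2.le).const_mul _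
  have inner_eq : ∀ u ∈ Ioo (0:ℝ) s, ∫ v, F (u, v) ∂μ
      = (u ^ (-(2*a)) * Af a t u) * ∫ v in Ioo u s, (v - u) ^ (a-1) * v ^ a := by
    intro u hu
    rw [indicator_slice_right G u]
    rw [show (∫ v, (Ioi u).indicator (fun v => G (u, v)) v ∂μ)
        = ∫ v in Ioo u s, G (u, v) from integral_restrict_indicator_right hu.1.le _]
    rw [show (fun v => G (u, v))
        = fun v => (u ^ (-(2*a)) * Af a t u) * ((v - u) ^ (a-1) * v ^ a) by
      funext v; simp only [hG]]
    exact MeasureTheory.integral_const_mul _ _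
  have hFnn : ∀ u ∈ Ioo (0:ℝ) s, ∀ v ∈ Ioo (0:ℝ) s, 0 ≤ F (u, v) := by
    intro u hu v hv
    by_cases h : u < v
    · have : F (u, v) = G (u, v) := by simp [hF, Set.indicator_apply, h]
      rw [this]
      simp only [hG]
      have h1 : (0:ℝ) ≤ u := hu.1.le
      have h3 : (0:ℝ) ≤ v - u := by linarith
      have h4 : (0:ℝ) ≤ v := hv.1.le
      have h5 := Af_nonneg (a := a) (t := t) u hu.1.le
      positivity
    · have : F (u, v) = 0 := by simp [hF, Set.indicator_apply, h]
      rw [this]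
  have hFint : Integrable F (μ.prod μ) := by
    rw [show F = Function.uncurry (fun u v => F (u, v)) from rfl]
    apply (integrable_prod_iff hFae).mpr
    constructor
    · filter_upwards [ae_restrict_mem measurableSet_Ioo] with u hu
      exact hslice u hu
    · apply Integrable.mono'
        (g := fun u => (t ^ a * (t ^ a / a)) * (s ^ a * (s ^ a / a)) * u ^ (-(2*a)))
      · apply Integrable.const_mul
        have := integrableOn_Ioo_rpow_sub (c := 0) (d := s) hs.le
          (show (-1:ℝ) < -(2*a) by linarith)
        simp at this; exact this
      · exact hFae.norm.integral_prod_right'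
      · filter_upwards [ae_restrict_mem measurableSet_Ioo] with u hu
        have h1 : (0:ℝ) ≤ u := hu.1.le
        have hnrm : ∫ v, ‖F (u, v)‖ ∂μ = ∫ v, F (u, v) ∂μ := by
          apply MeasureTheory.integral_congr_ae
          filter_upwards [ae_restrict_mem measurableSet_Ioo] with v hv
          exact Real.norm_of_nonneg (hFnn u hu v hv)
        have hIpos : 0 ≤ ∫ v in Ioo u s, (v - u) ^ (a-1) * v ^ a := by
          apply setIntegral_nonneg measurableSet_Ioo
          intro v hv
          have h3 : (0:ℝ) ≤ v - u := by linarith [hv.1]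
          have h4 : (0:ℝ) ≤ v := le_trans h1 hv.1.le
          positivity
        have hAnn := Af_nonneg (a := a) (t := t) u h1
        have hAB : 0 ≤ u ^ (-(2*a)) * Af a t u :=
          mul_nonneg (Real.rpow_nonneg h1 _) hAnn
        rw [Real.norm_of_nonneg (by rw [hnrm, inner_eq u hu]; exact mul_nonneg hAB hIpos)]
        rw [hnrm, inner_eq u hu]
        have hb1 : Af a t u ≤ t ^ a * (t ^ a / a) := Af_bound ha h1 (le_trans hu.2.le hst)
        have hb2 : (∫ v in Ioo u s, (v - u) ^ (a-1) * v ^ a) ≤ s ^ a * (s ^ a / a) :=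
          slice_bound ha h1 hu.2.le
        have hu2a : (0:ℝ) ≤ u ^ (-(2*a)) := Real.rpow_nonneg h1 _
        calc u ^ (-(2*a)) * Af a t u * ∫ v in Ioo u s, (v - u) ^ (a-1) * v ^ a
            ≤ u ^ (-(2*a)) * (t ^ a * (t ^ a / a)) * (s ^ a * (s ^ a / a)) := by
              exact mul_le_mul (mul_le_mul_of_nonneg_left hb1 hu2a) hb2 hIpos
                (mul_nonneg hu2a (by positivity))
          _ = t ^ a * (t ^ a / a) * (s ^ a * (s ^ a / a)) * u ^ (-(2*a)) := by ring
  have swap := MeasureTheory.integral_integral_swap (f := fun u v => F (u, v))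
    (μ := μ) (ν := μ) hFint
  calc ∫ u in Ioo 0 s, u ^ (-(2*a)) * Af a t u * ∫ v in Ioo u s, (v - u) ^ (a-1) * v ^ a
      = ∫ u, (∫ v, F (u, v) ∂μ) ∂μ := by
        apply (setIntegral_congr_fun measurableSet_Ioo ?_).symm
        intro u hu
        exact inner_eq u hu
    _ = ∫ v, (∫ u, F (u, v) ∂μ) ∂μ := swap
    _ = ∫ v in Ioo 0 s, v ^ a *
          ∫ u in Ioo 0 v, u ^ (-(2*a)) * Af a t u * (v - u) ^ (a-1) := by
        apply setIntegral_congr_fun measurableSet_Ioo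
        intro v hv
        beta_reduce
        rw [indicator_slice_left G v]
        rw [show (∫ u, (Iio v).indicator (fun u => G (u, v)) u ∂μ)
            = ∫ u in Ioo 0 (min v s), G (u, v) from integral_restrict_indicator_left hv.1 _]
        rw [min_eq_left hv.2.le]
        rw [show (fun u => G (u, v))
            = fun u => v ^ a * (u ^ (-(2*a)) * Af a t u * (v - u) ^ (a-1)) by
          funext u; simp only [hG]; ring]
        exact MeasureTheory.integral_const_mul _ _



lemma key_beta' {a r v : ℝ} (ha : 0 < a) (hr : 0 < r) (hv : 0 < v) (hne : r ≠ v) :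
    ∫ u in Ioo 0 (min r v), u ^ (-(2*a)) * ((v - u) ^ (a-1) * (r - u) ^ (a-1))
      = (∫ z in Ioo (0:ℝ) 1, z ^ (-(2*a)) * (1 - z) ^ (a-1))
          * ((v*r) ^ (-a) * |v - r| ^ (2*a-1)) := by
  rcases lt_or_gt_of_ne hne with h | h
  · rw [min_eq_left h.le]
    rw [abs_of_pos (show (0:ℝ) < v - r by linarith), show (v*r : ℝ) = r*v from mul_comm _ _]
    rw [← key_beta (a := a) ha hr h]
    apply setIntegral_congr_fun measurableSet_Ioo
    intro u hu; ring
  · rw [min_eq_right h.le]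
    rw [abs_sub_comm, abs_of_pos (show (0:ℝ) < r - v by linarith)]
    exact key_beta (a := a) ha hv h

lemma ii_abs_rpow_left {v p : ℝ} (hv : 0 ≤ v) (hp : -1 < p) :
    IntervalIntegrable (fun r => |v - r| ^ p) volume 0 v := by
  apply (ii_rpow_sub' (d := v) 0 hp).congr_ae
  filter_upwards [ae_restrict_mem measurableSet_uIoc] with r hr
  rw [uIoc_of_le hv] at hr
  rw [abs_of_nonneg (by linarith [hr.2])]

lemma abs_int {v t p : ℝ} (hv : 0 < v) (hvt : v ≤ t) (hp : -1 < p) :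
    ∫ r in Ioo 0 t, |v - r| ^ p = (v ^ (p+1) + (t - v) ^ (p+1)) / (p+1) := by
  have h0t : (0:ℝ) ≤ t := by linarith
  have hp1 : p + 1 ≠ 0 := by linarith
  rw [← integral_Ioc_eq_integral_Ioo, ← intervalIntegral.integral_of_le h0t]
  have h1 : IntervalIntegrable (fun r => |v - r| ^ p) volume 0 v := ii_abs_rpow_left hv.le hp
  have h2 : IntervalIntegrable (fun r => |v - r| ^ p) volume v t := by
    apply (ii_rpow_sub (c := v) t hp).congr_ae
    filter_upwards [ae_restrict_mem measurableSet_uIoc] with r hr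
    rw [uIoc_of_le hvt] at hr
    rw [abs_of_nonpos (by linarith [hr.1]), neg_sub]
  rw [← intervalIntegral.integral_add_adjacent_intervals h1 h2]
  have e1 : ∫ r in (0:ℝ)..v, |v - r| ^ p = ∫ r in (0:ℝ)..v, (v - r) ^ p := by
    apply intervalIntegral.integral_congr
    intro r hr
    rw [uIcc_of_le hv.le] at hr
    beta_reduce
    rw [abs_of_nonneg (by linarith [hr.2])]
  have e2 : ∫ r in v..t, |v - r| ^ p = ∫ r in v..t, (r - v) ^ p := by
    apply intervalIntegral.integral_congr
    intro r hr
    rw [uIcc_of_le hvt] at hr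
    beta_reduce
    rw [abs_of_nonpos (by linarith [hr.1]), neg_sub]
  rw [e1, e2, integral_rpow_sub' hv.le hp, integral_rpow_sub hvt hp]
  simp only [sub_zero]
  ring



lemma mid {a v t : ℝ} (ha : 0 < a) (hv : 0 < v) (hvt : v ≤ t) :
    ∫ r in Ioo 0 t, r ^ a *
        ∫ u in Ioo 0 (min r v), u ^ (-(2*a)) * ((v - u) ^ (a-1) * (r - u) ^ (a-1))
      = (∫ z in Ioo (0:ℝ) 1, z ^ (-(2*a)) * (1 - z) ^ (a-1)) * v ^ (-a)
          * ((v ^ (2*a) + (t - v) ^ (2*a)) / (2*a)) := by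
  set Bz := ∫ z in Ioo (0:ℝ) 1, z ^ (-(2*a)) * (1 - z) ^ (a-1) with hBz
  have hae : ∀ᵐ (r : ℝ) ∂(volume.restrict (Ioo 0 t)), r ≠ v := by
    apply ae_restrict_of_ae
    rw [ae_iff, show {r : ℝ | ¬ r ≠ v} = {v} by ext x; simp]
    exact measure_singleton v
  have step1 : ∫ r in Ioo 0 t, r ^ a *
        ∫ u in Ioo 0 (min r v), u ^ (-(2*a)) * ((v - u) ^ (a-1) * (r - u) ^ (a-1))
      = ∫ r in Ioo 0 t, (Bz * v ^ (-a)) * |v - r| ^ (2*a-1) := by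
    apply MeasureTheory.integral_congr_ae
    filter_upwards [ae_restrict_mem measurableSet_Ioo, hae] with r hr hne
    rw [key_beta' ha hr.1 hv hne, Real.mul_rpow hv.le hr.1.le]
    have hra : r ^ a * r ^ (-a) = 1 := by
      rw [← Real.rpow_add hr.1]
      simp
    calc r ^ a * (Bz * (v ^ (-a) * r ^ (-a) * |v - r| ^ (2*a-1)))
        = (r ^ a * r ^ (-a)) * (Bz * v ^ (-a) * |v - r| ^ (2*a-1)) := by ring
      _ = (Bz * v ^ (-a)) * |v - r| ^ (2*a-1) := by rw [hra]; ring
  rw [step1, MeasureTheory.integral_const_mul, abs_int hv hvt (by linarith)]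
  rw [show 2*a - 1 + 1 = 2*a by ring]

lemma fin_int {a s t : ℝ} (ha : 0 < a) (hs : 0 < s) (hst : s ≤ t) :
    ∫ v in Ioo 0 s, (v ^ (2*a) + (t - v) ^ (2*a))
      = s ^ (2*a+1) / (2*a+1) + (t ^ (2*a+1) - (t - s) ^ (2*a+1)) / (2*a+1) := by
  have ht : 0 < t := lt_of_lt_of_le hs hst
  have hint1 : IntegrableOn (fun v : ℝ => v ^ (2*a)) (Ioo 0 s) := by
    have := integrableOn_Ioo_rpow_sub (c := 0) (d := s) hs.le
      (show (-1:ℝ) < 2*a by linarith)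
    simpa using this
  have hint2 : IntegrableOn (fun v : ℝ => (t - v) ^ (2*a)) (Ioo 0 s) := by
    apply (ContinuousOn.integrableOn_Icc ?_).mono_set Ioo_subset_Icc_self
    apply ContinuousOn.rpow_const (by fun_prop)
    exact fun x _ => Or.inr (by linarith)
  rw [MeasureTheory.integral_add hint1 hint2]
  have e1 : ∫ v in Ioo 0 s, v ^ (2*a) = s ^ (2*a+1) / (2*a+1) := by
    have := setIntegral_rpow_sub (c := 0) (d := s) hs.le (show (-1:ℝ) < 2*a by linarith)
    simpa using this
  have e2 : ∫ v in Ioo 0 s, (t - v) ^ (2*a)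
      = (t ^ (2*a+1) - (t - s) ^ (2*a+1)) / (2*a+1) := by
    rw [← integral_Ioc_eq_integral_Ioo, ← intervalIntegral.integral_of_le hs.le]
    rw [intervalIntegral.integral_comp_sub_left (fun x => x ^ (2*a)) t]
    rw [integral_rpow (Or.inl (by linarith))]
    ring
  rw [e1, e2]



lemma betaFun_eq_Ioo {H : ℝ} :
    betaFun (2 - 2 * H) (H - 1 / 2)
      = ∫ z in Ioo (0:ℝ) 1, z ^ (-(2 * (H - 1 / 2))) * (1 - z) ^ ((H - 1 / 2) - 1) := by
  unfold betaFun
  rw [intervalIntegral.integral_of_le zero_le_one, integral_Ioc_eq_integral_Ioo]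
  apply setIntegral_congr_fun measurableSet_Ioo
  intro z hz
  rw [show (2 - 2 * H - 1 : ℝ) = -(2 * (H - 1 / 2)) by ring]

lemma betaFun_pos {H : ℝ} (hH : 1 / 2 < H) (hH1 : H < 1) :
    0 < betaFun (2 - 2 * H) (H - 1 / 2) := by
  unfold betaFun
  apply intervalIntegral.intervalIntegral_pos_of_pos_on
  · have := ii_rpow_mul (c := (0:ℝ)) (d := 1) one_pos
      (p := 2 - 2 * H - 1) (q := H - 1 / 2 - 1) (by linarith) (by linarith)
    simpa using this
  · intro x hx
    have h1 : 0 < x := hx.1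
    have h2 : 0 < 1 - x := by linarith [hx.2]
    positivity
  · norm_num



end FbmAux

open FbmAux Set in
/-- For `H ∈ (1/2, 1)` the kernel `K_H` reproduces the covariance of
fractional Brownian motion: `∫_0^s K_H(t,u) K_H(s,u) du = R_H(t,s)`
for `0 < s ≤ t`. -/
theorem fbmKernel_reproduces_covariance
    (H : ℝ) (hH : 1 / 2 < H) (hH1 : H < 1)
    (s t : ℝ) (hs : 0 < s) (hst : s ≤ t) :
    ∫ u in (0:ℝ)..s, fbmKernel H t u * fbmKernel H s u
      = (t ^ (2 * H) + s ^ (2 * H) - (t - s) ^ (2 * H)) / 2 := by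
  have ht : 0 < t := lt_of_lt_of_le hs hst
  have ha : 0 < H - 1 / 2 := by linarith
  have ha2 : H - 1 / 2 < 1 / 2 := by linarith
  have hBeq := betaFun_eq_Ioo (H := H)
  have hBpos : 0 < betaFun (2 - 2 * H) (H - 1 / 2) := betaFun_pos hH hH1
  have hBz : 0 < ∫ z in Ioo (0:ℝ) 1, z ^ (-(2 * (H - 1 / 2))) * (1 - z) ^ ((H - 1 / 2) - 1) :=
    hBeq ▸ hBpos
  rw [intervalIntegral.integral_of_le hs.le, integral_Ioc_eq_integral_Ioo]
  set Bz := ∫ z in Ioo (0:ℝ) 1, z ^ (-(2 * (H - 1 / 2))) * (1 - z) ^ ((H - 1 / 2) - 1) with hBzdef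
  have hker : ∀ u ∈ Ioo (0:ℝ) s, fbmKernel H t u * fbmKernel H s u
      = (H * (2 * H - 1) / Bz) * (u ^ (-(2 * (H - 1 / 2))) * Af (H - 1 / 2) t u
          * ∫ v in Ioo u s, (v - u) ^ (H - 1 / 2 - 1) * v ^ (H - 1 / 2)) := by
    intro u hu
    have hu0 := hu.1
    have hIA : (∫ r in u..t, (r - u) ^ (H - 1 / 2 - 1) * r ^ (H - 1 / 2))
        = Af (H - 1 / 2) t u := by
      rw [Af_eq u hu0.le, intervalIntegral.integral_of_le (by linarith [hu.2] : u ≤ t),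
        integral_Ioc_eq_integral_Ioo]
    have hIB : (∫ r in u..s, (r - u) ^ (H - 1 / 2 - 1) * r ^ (H - 1 / 2))
        = ∫ v in Ioo u s, (v - u) ^ (H - 1 / 2 - 1) * v ^ (H - 1 / 2) := by
      rw [intervalIntegral.integral_of_le hu.2.le, integral_Ioc_eq_integral_Ioo]
    have hccnn : 0 ≤ H * (2 * H - 1) / betaFun (2 - 2 * H) (H - 1 / 2) := by
      apply div_nonneg _ hBpos.le
      apply mul_nonneg (by linarith) (by linarith)
    have hcc : Real.sqrt (H * (2 * H - 1) / betaFun (2 - 2 * H) (H - 1 / 2))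
        * Real.sqrt (H * (2 * H - 1) / betaFun (2 - 2 * H) (H - 1 / 2))
        = H * (2 * H - 1) / Bz := by
      rw [Real.mul_self_sqrt hccnn, hBeq]
    have h2 : u ^ (-(H - 1 / 2)) * u ^ (-(H - 1 / 2)) = u ^ (-(2 * (H - 1 / 2))) := by
      rw [← Real.rpow_add hu0]
      congr 1
      ring
    simp only [fbmKernel]
    rw [hIA, hIB]
    calc (Real.sqrt (H * (2 * H - 1) / betaFun (2 - 2 * H) (H - 1 / 2))
            * u ^ (-(H - 1 / 2)) * Af (H - 1 / 2) t u)
          * (Real.sqrt (H * (2 * H - 1) / betaFun (2 - 2 * H) (H - 1 / 2))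
            * u ^ (-(H - 1 / 2))
            * ∫ v in Ioo u s, (v - u) ^ (H - 1 / 2 - 1) * v ^ (H - 1 / 2))
        = (Real.sqrt (H * (2 * H - 1) / betaFun (2 - 2 * H) (H - 1 / 2))
            * Real.sqrt (H * (2 * H - 1) / betaFun (2 - 2 * H) (H - 1 / 2)))
          * ((u ^ (-(H - 1 / 2)) * u ^ (-(H - 1 / 2)))
            * (Af (H - 1 / 2) t u
              * ∫ v in Ioo u s, (v - u) ^ (H - 1 / 2 - 1) * v ^ (H - 1 / 2))) := by ring
      _ = (H * (2 * H - 1) / Bz) * (u ^ (-(2 * (H - 1 / 2))) * Af (H - 1 / 2) t u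
            * ∫ v in Ioo u s, (v - u) ^ (H - 1 / 2 - 1) * v ^ (H - 1 / 2)) := by
          rw [hcc, h2]; ring
  calc ∫ u in Ioo 0 s, fbmKernel H t u * fbmKernel H s u
      = ∫ u in Ioo 0 s, (H * (2 * H - 1) / Bz)
          * (u ^ (-(2 * (H - 1 / 2))) * Af (H - 1 / 2) t u
            * ∫ v in Ioo u s, (v - u) ^ (H - 1 / 2 - 1) * v ^ (H - 1 / 2)) := by
        exact setIntegral_congr_fun measurableSet_Ioo hker
    _ = (H * (2 * H - 1) / Bz)
          * ∫ u in Ioo 0 s, u ^ (-(2 * (H - 1 / 2))) * Af (H - 1 / 2) t u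
            * ∫ v in Ioo u s, (v - u) ^ (H - 1 / 2 - 1) * v ^ (H - 1 / 2) :=
        MeasureTheory.integral_const_mul _ _
    _ = (H * (2 * H - 1) / Bz)
          * ∫ v in Ioo 0 s, v ^ (H - 1 / 2) *
              ∫ u in Ioo 0 v, u ^ (-(2 * (H - 1 / 2))) * Af (H - 1 / 2) t u
                * (v - u) ^ (H - 1 / 2 - 1) := by
        rw [fub1 ha ha2 hs hst]
    _ = (H * (2 * H - 1) / Bz)
          * ∫ v in Ioo 0 s, (Bz / (2 * (H - 1 / 2)))
              * (v ^ (2 * (H - 1 / 2)) + (t - v) ^ (2 * (H - 1 / 2))) := by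
        congr 1
        apply setIntegral_congr_fun measurableSet_Ioo
        intro v hv
        beta_reduce
        have hvt : v ≤ t := le_trans hv.2.le hst
        have inner1 : (∫ u in Ioo 0 v, u ^ (-(2 * (H - 1 / 2))) * Af (H - 1 / 2) t u
              * (v - u) ^ (H - 1 / 2 - 1))
            = ∫ u in Ioo 0 v, u ^ (-(2 * (H - 1 / 2))) * (v - u) ^ (H - 1 / 2 - 1)
                * ∫ r in Ioo u t, (r - u) ^ (H - 1 / 2 - 1) * r ^ (H - 1 / 2) := by
          apply setIntegral_congr_fun measurableSet_Ioo
          intro u hu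
          beta_reduce
          rw [Af_eq u hu.1.le]
          ring
        rw [inner1, fub2 ha ha2 hv.1 hvt, mid ha hv.1 hvt]
        have hva : v ^ (H - 1 / 2) * v ^ (-(H - 1 / 2)) = 1 := by
          rw [← Real.rpow_add hv.1]
          simp
        calc v ^ (H - 1 / 2) * (Bz * v ^ (-(H - 1 / 2))
              * ((v ^ (2 * (H - 1 / 2)) + (t - v) ^ (2 * (H - 1 / 2))) / (2 * (H - 1 / 2))))
            = (v ^ (H - 1 / 2) * v ^ (-(H - 1 / 2))) * (Bz
              * ((v ^ (2 * (H - 1 / 2)) + (t - v) ^ (2 * (H - 1 / 2)))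
                / (2 * (H - 1 / 2)))) := by ring
          _ = Bz / (2 * (H - 1 / 2))
              * (v ^ (2 * (H - 1 / 2)) + (t - v) ^ (2 * (H - 1 / 2))) := by
              rw [hva]; ring
    _ = (H * (2 * H - 1) / Bz) * (Bz / (2 * (H - 1 / 2))
          * ∫ v in Ioo 0 s, (v ^ (2 * (H - 1 / 2)) + (t - v) ^ (2 * (H - 1 / 2)))) :=
        by rw [MeasureTheory.integral_const_mul]
    _ = (H * (2 * H - 1) / Bz) * (Bz / (2 * (H - 1 / 2))
          * (s ^ (2 * (H - 1 / 2) + 1) / (2 * (H - 1 / 2) + 1)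
            + (t ^ (2 * (H - 1 / 2) + 1) - (t - s) ^ (2 * (H - 1 / 2) + 1))
              / (2 * (H - 1 / 2) + 1))) := by
        rw [fin_int ha hs hst]
    _ = (t ^ (2 * H) + s ^ (2 * H) - (t - s) ^ (2 * H)) / 2 := by
        rw [show 2 * (H - 1 / 2) + 1 = 2 * H by ring]
        rw [show 2 * (H - 1 / 2) = 2 * H - 1 by ring]
        have h1 : Bz ≠ 0 := ne_of_gt hBz
        have h2 : 2 * H - 1 ≠ 0 := (show (0:ℝ) < 2 * H - 1 by linarith).ne'
        have h3 : H ≠ 0 := (show (0:ℝ) < H by linarith).ne'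
        have h4 : H * 2 - 1 ≠ 0 := (show (0:ℝ) < H * 2 - 1 by linarith).ne'
        field_simp
        ring
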